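/- Let m ≥ 1 and n_c ≥ 5 be integers and let a > 0. Every phase-cohesive equilibrium θ of the Kuramoto dynamics on the 1D honeycomb graph G(m, n_c) with identical natural frequencies and uniform coupling a — that is, every phase-cohesive θ ∈ ℝ^{m(n_c−1)+1} with Σ_{j : (i,j) edge} sin(θ_j − θ_i) = 0 for every vertex i — satisfies conditions (C1)–(C2) up to adjusting each coordinate by an integer multiple of 2π; equivalently, there exists an integer vector (k_0, ..., k_{m−1}) with |k_p| ≤ ⌈n_c/4⌉ − 1 such that along every edge of the p-th cycle the counterclockwise difference of θ equals 2π k_p / n_c. -/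

import Mathlib

/-- The counterclockwise difference: the unique element of `[-π, π)` congruent to `x`
modulo `2π`. -/
noncomputable def dcc (x : ℝ) : ℝ :=
  x - 2 * Real.pi * ((⌊(x + Real.pi) / (2 * Real.pi)⌋ : ℤ) : ℝ)

/-- Edge relation of the 1D honeycomb graph `G(m, n_c)` on vertices `{1, ..., m(n_c-1)+1}`. -/
def honEdge (m nc i j : ℕ) : Prop :=
  (1 ≤ i ∧ i ≤ m * (nc - 1) ∧ j = i + 1) ∨
  (1 ≤ j ∧ j ≤ m * (nc - 1) ∧ i = j + 1) ∨
  (∃ p, p < m ∧ ((i = p * (nc - 1) + 1 ∧ j = (p + 1) * (nc - 1) + 1) ∨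
                 (j = p * (nc - 1) + 1 ∧ i = (p + 1) * (nc - 1) + 1)))

open Classical in
/-- The Kuramoto coupling sum `Σ_{j : (i,j) edge} sin(θ_j - θ_i)` at vertex `i`. -/
noncomputable def couplingSum (m nc : ℕ) (θ : ℕ → ℝ) (i : ℕ) : ℝ :=
  ∑ j ∈ Finset.range (m * (nc - 1) + 2),
    if honEdge m nc i j then Real.sin (θ j - θ i) else 0

open Real

private lemma dcc_spec (x : ℝ) : ∃ t : ℤ, x = dcc x + 2 * π * t :=
  ⟨⌊(x + π) / (2 * π)⌋, by unfold dcc; ring⟩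

private lemma sin_dcc (x : ℝ) : Real.sin (dcc x) = Real.sin x := by
  unfold dcc
  rw [show x - 2 * π * ((⌊(x + π) / (2 * π)⌋ : ℤ) : ℝ)
      = x - (⌊(x + π) / (2 * π)⌋ : ℤ) * (2 * π) by ring]
  exact Real.sin_sub_int_mul_two_pi x _

private lemma sin_inj {a b : ℝ} (ha : |a| < π / 2) (hb : |b| < π / 2)
    (h : Real.sin a = Real.sin b) : a = b := by
  rw [abs_lt] at ha hb
  exact Real.injOn_sin (Set.mem_Icc.mpr ⟨le_of_lt ha.1, le_of_lt ha.2⟩)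
    (Set.mem_Icc.mpr ⟨le_of_lt hb.1, le_of_lt hb.2⟩) h

private lemma couplingSum_eq (m nc : ℕ) (θ : ℕ → ℝ) (i : ℕ) (s : Finset ℕ)
    (hs : ∀ j, honEdge m nc i j ↔ j ∈ s)
    (hr : ∀ j ∈ s, j < m * (nc - 1) + 2) :
    couplingSum m nc θ i = ∑ j ∈ s, Real.sin (θ j - θ i) := by
  classical
  unfold couplingSum
  rw [← Finset.sum_subset (fun j hj => Finset.mem_range.mpr (hr j hj))
      (fun j _ hjs => if_neg (fun h => hjs ((hs j).mp h)))]
  exact Finset.sum_congr rfl fun j hj => if_pos ((hs j).mpr hj)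

private lemma honEdge_internal {m nc i : ℕ} (hnc : 5 ≤ nc) (h2 : 2 ≤ i)
    (hN : i ≤ m * (nc - 1)) (hnd : ∀ q, i ≠ q * (nc - 1) + 1) (j : ℕ) :
    honEdge m nc i j ↔ (j = i - 1 ∨ j = i + 1) := by
  constructor
  · rintro (⟨h1, hle, rfl⟩ | ⟨h1, hle, hij⟩ | ⟨q, hq, ⟨hi, hj⟩ | ⟨hj, hi⟩⟩)
    · right; rfl
    · left; omega
    · exact absurd hi (hnd q)
    · exact absurd hi (hnd (q + 1))
  · rintro (rfl | rfl)
    · exact Or.inr (Or.inl (by omega))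
    · exact Or.inl ⟨by omega, by omega, rfl⟩

private lemma honEdge_one {m nc : ℕ} (hnc : 5 ≤ nc) (hm : 1 ≤ m) (j : ℕ) :
    honEdge m nc 1 j ↔ (j = 2 ∨ j = (nc - 1) + 1) := by
  have f1 : nc - 1 ≤ m * (nc - 1) := Nat.le_mul_of_pos_left _ hm
  constructor
  · rintro (⟨h1, hle, rfl⟩ | ⟨h1, hle, hij⟩ | ⟨q, hq, ⟨hi, hj⟩ | ⟨hj, hi⟩⟩)
    · left; rfl
    · omega
    · have hq0 : q = 0 := by
        rcases Nat.mul_eq_zero.mp (show q * (nc - 1) = 0 by omega) with h | h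
        · exact h
        · omega
      subst hq0
      right; rw [hj]; simp
    · have := Nat.mul_eq_zero.mp (show (q + 1) * (nc - 1) = 0 by omega); omega
  · rintro (rfl | rfl)
    · exact Or.inl ⟨le_refl 1, by omega, rfl⟩
    · exact Or.inr (Or.inr ⟨0, by omega, Or.inl ⟨by simp, by simp⟩⟩)

private lemma honEdge_junction {m nc p : ℕ} (hnc : 5 ≤ nc) (hpm : p + 1 < m) (j : ℕ) :
    honEdge m nc ((p + 1) * (nc - 1) + 1) j ↔
      (j = (p + 1) * (nc - 1) ∨ j = (p + 1) * (nc - 1) + 2 ∨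
       j = p * (nc - 1) + 1 ∨ j = (p + 2) * (nc - 1) + 1) := by
  have hd : 4 ≤ nc - 1 := by omega
  have e1 : (p + 1) * (nc - 1) = p * (nc - 1) + (nc - 1) := by ring
  have e2 : (p + 2) * (nc - 1) = p * (nc - 1) + 2 * (nc - 1) := by ring
  have e3 : (p + 2) * (nc - 1) ≤ m * (nc - 1) := Nat.mul_le_mul_right _ hpm
  have key : ∀ q : ℕ, q * (nc - 1) = (p + 1) * (nc - 1) → q = p + 1 := fun q h =>
    Nat.eq_of_mul_eq_mul_right (by omega) h
  constructor
  · rintro (⟨h1, hle, rfl⟩ | ⟨h1, hle, hij⟩ | ⟨q, hq, ⟨hi, hj⟩ | ⟨hj, hi⟩⟩)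
    · right; left; rfl
    · left; omega
    · have hqp : q = p + 1 := key q (by omega)
      subst hqp
      right; right; right; exact hj
    · have hqp : q + 1 = p + 1 := key (q + 1) (by omega)
      have hq' : q = p := by omega
      subst hq'
      right; right; left; exact hj
  · rintro (rfl | rfl | rfl | rfl)
    · exact Or.inr (Or.inl ⟨by omega, by omega, by omega⟩)
    · exact Or.inl ⟨by omega, by omega, rfl⟩
    · exact Or.inr (Or.inr ⟨p, by omega, Or.inr ⟨rfl, rfl⟩⟩)
    · exact Or.inr (Or.inr ⟨p + 1, hpm, Or.inl ⟨rfl, rfl⟩⟩)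

/-- every phase-cohesive equilibrium of the Kuramoto dynamics on the 1D
honeycomb graph `G(m, n_c)` (identical natural frequencies, uniform coupling `a > 0`)
satisfies conditions (C1)–(C2) up to integer multiples of `2π`: there is an integer
vector `(k_0, ..., k_{m-1})` with `|k_p| ≤ ⌈n_c/4⌉ - 1` such that along every edge of
the `p`-th cycle the counterclockwise difference of `θ` equals `2π k_p / n_c`. -/
theorem phase_cohesive_equilibria_are_C1C2 (m nc : ℕ) (hm : 1 ≤ m) (hnc : 5 ≤ nc)
    (a : ℝ) (ha : 0 < a) (θ : ℕ → ℝ)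
    (hcoh : ∀ i j, honEdge m nc i j → |dcc (θ i - θ j)| < Real.pi / 2)
    (heq : ∀ i, 1 ≤ i → i ≤ m * (nc - 1) + 1 → couplingSum m nc θ i = 0) :
    ∃ k : ℕ → ℤ,
      (∀ p, p < m → |k p| ≤ ⌈(nc : ℚ) / 4⌉ - 1) ∧
      (∀ p, p < m → ∀ i, p * (nc - 1) + 1 ≤ i → i ≤ (p + 1) * (nc - 1) →
        dcc (θ (i + 1) - θ i) = 2 * Real.pi * (k p : ℝ) / (nc : ℝ)) ∧
      (∀ p, p < m →
        dcc (θ (p * (nc - 1) + 1) - θ ((p + 1) * (nc - 1) + 1)) =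
          2 * Real.pi * (k p : ℝ) / (nc : ℝ)) := by
  have hd : 4 ≤ nc - 1 := by omega
  have hπ := Real.pi_pos
  -- cohesiveness along path edges
  have hcohP : ∀ i, 1 ≤ i → i ≤ m * (nc - 1) → |dcc (θ (i + 1) - θ i)| < π / 2 :=
    fun i h1 h2 => hcoh (i + 1) i (Or.inr (Or.inl ⟨h1, h2, rfl⟩))
  -- δ p : common phase difference along the edges of cycle p
  obtain ⟨δ, hδ⟩ : ∃ δ : ℕ → ℝ, ∀ p,
      δ p = dcc (θ (p * (nc - 1) + 2) - θ (p * (nc - 1) + 1)) := ⟨_, fun p => rfl⟩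
  obtain ⟨c, hc⟩ : ∃ c : ℕ → ℝ, ∀ p,
      c p = dcc (θ ((p + 1) * (nc - 1) + 1) - θ (p * (nc - 1) + 1)) := ⟨_, fun p => rfl⟩
  have hδcoh : ∀ p, p < m → |δ p| < π / 2 := by
    intro p hp
    have e1 : (p + 1) * (nc - 1) = p * (nc - 1) + (nc - 1) := by ring
    have e3 : (p + 1) * (nc - 1) ≤ m * (nc - 1) := Nat.mul_le_mul_right _ hp
    rw [hδ]
    exact hcohP (p * (nc - 1) + 1) (by omega) (by omega)
  have hccoh : ∀ p, p < m → |c p| < π / 2 := by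
    intro p hp
    rw [hc]
    exact hcoh _ _ (Or.inr (Or.inr ⟨p, hp, Or.inr ⟨rfl, rfl⟩⟩))
  -- equilibrium at internal (degree-2) vertices
  have eq_int : ∀ i : ℕ, 2 ≤ i → i ≤ m * (nc - 1) → (∀ q, i ≠ q * (nc - 1) + 1) →
      Real.sin (θ (i - 1) - θ i) + Real.sin (θ (i + 1) - θ i) = 0 := by
    intro i h2 hNle hq
    have h := heq i (by omega) (by omega)
    rw [couplingSum_eq m nc θ i {i - 1, i + 1}
        (fun j => (honEdge_internal hnc h2 hNle hq j).trans (by simp))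
        (fun j hj => by
          simp only [Finset.mem_insert, Finset.mem_singleton] at hj; omega)] at h
    rwa [Finset.sum_pair (by omega : i - 1 ≠ i + 1)] at h
  -- equilibrium at internal junction vertices
  have eq_junc : ∀ p : ℕ, p + 1 < m →
      Real.sin (θ ((p + 1) * (nc - 1)) - θ ((p + 1) * (nc - 1) + 1)) +
      (Real.sin (θ ((p + 1) * (nc - 1) + 2) - θ ((p + 1) * (nc - 1) + 1)) +
      (Real.sin (θ (p * (nc - 1) + 1) - θ ((p + 1) * (nc - 1) + 1)) +
      Real.sin (θ ((p + 2) * (nc - 1) + 1) - θ ((p + 1) * (nc - 1) + 1)))) = 0 := by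
    intro p hp
    have e1 : (p + 1) * (nc - 1) = p * (nc - 1) + (nc - 1) := by ring
    have e2 : (p + 2) * (nc - 1) = p * (nc - 1) + 2 * (nc - 1) := by ring
    have e3 : (p + 2) * (nc - 1) ≤ m * (nc - 1) := Nat.mul_le_mul_right _ hp
    have h := heq ((p + 1) * (nc - 1) + 1) (by omega) (by omega)
    rw [couplingSum_eq m nc θ _
        {(p + 1) * (nc - 1), (p + 1) * (nc - 1) + 2, p * (nc - 1) + 1, (p + 2) * (nc - 1) + 1}
        (fun j => (honEdge_junction hnc hp j).trans (by simp))
        (fun j hj => by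
          simp only [Finset.mem_insert, Finset.mem_singleton] at hj; omega)] at h
    rw [Finset.sum_insert (by
          simp only [Finset.mem_insert, Finset.mem_singleton]; omega),
        Finset.sum_insert (by
          simp only [Finset.mem_insert, Finset.mem_singleton]; omega),
        Finset.sum_pair (by omega)] at h
    exact h
  -- Step A: all path-edge differences within cycle p equal δ p
  have stepA : ∀ p, p < m → ∀ i, p * (nc - 1) + 1 ≤ i → i ≤ (p + 1) * (nc - 1) →
      dcc (θ (i + 1) - θ i) = δ p := by
    intro p hp
    have e1 : (p + 1) * (nc - 1) = p * (nc - 1) + (nc - 1) := by ring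
    have e3 : (p + 1) * (nc - 1) ≤ m * (nc - 1) := Nat.mul_le_mul_right _ hp
    intro i hi
    induction i, hi using Nat.le_induction with
    | base =>
      intro _
      rw [hδ, show p * (nc - 1) + 2 = p * (nc - 1) + 1 + 1 from rfl]
    | succ i hi ih =>
      intro hle
      have hprev : dcc (θ (i + 1) - θ i) = δ p := ih (by omega)
      have hnd : ∀ q, i + 1 ≠ q * (nc - 1) + 1 := by
        intro q hq
        have h1 : p * (nc - 1) < q * (nc - 1) := by omega
        have h2 : q * (nc - 1) < (p + 1) * (nc - 1) := by omega
        have g1 := (Nat.mul_lt_mul_right (show 0 < nc - 1 by omega)).mp h1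
        have g2 := (Nat.mul_lt_mul_right (show 0 < nc - 1 by omega)).mp h2
        omega
      have hint := eq_int (i + 1) (by omega) (by omega) hnd
      simp only [Nat.add_sub_cancel] at hint
      apply sin_inj (hcohP (i + 1) (by omega) (by omega)) (hδcoh p hp)
      rw [sin_dcc, ← hprev, sin_dcc]
      have hneg : Real.sin (θ i - θ (i + 1)) = - Real.sin (θ (i + 1) - θ i) := by
        rw [show θ i - θ (i + 1) = -(θ (i + 1) - θ i) by ring, Real.sin_neg]
      linarith [hint]
  -- Step B: telescoping around cycle p
  have stepB : ∀ p, p < m → ∃ T : ℤ,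
      θ ((p + 1) * (nc - 1) + 1) - θ (p * (nc - 1) + 1)
        = ((nc - 1 : ℕ) : ℝ) * δ p + 2 * π * T := by
    intro p hp
    have e1 : (p + 1) * (nc - 1) = p * (nc - 1) + (nc - 1) := by ring
    have key : ∀ l, l ≤ nc - 1 → ∃ T : ℤ,
        θ (p * (nc - 1) + 1 + l) - θ (p * (nc - 1) + 1) = (l : ℝ) * δ p + 2 * π * T := by
      intro l
      induction l with
      | zero => intro _; exact ⟨0, by simp⟩
      | succ l ih =>
        intro hl
        obtain ⟨T, hT⟩ := ih (by omega)
        have hA : dcc (θ (p * (nc - 1) + 1 + l + 1) - θ (p * (nc - 1) + 1 + l)) = δ p :=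
          stepA p hp _ (by omega) (by omega)
        obtain ⟨t, ht⟩ := dcc_spec (θ (p * (nc - 1) + 1 + l + 1) - θ (p * (nc - 1) + 1 + l))
        rw [hA] at ht
        refine ⟨T + t, ?_⟩
        have hidx : p * (nc - 1) + 1 + (l + 1) = p * (nc - 1) + 1 + l + 1 := rfl
        rw [hidx]
        push_cast
        linarith [hT, ht]
    obtain ⟨T, hT⟩ := key (nc - 1) le_rfl
    refine ⟨T, ?_⟩
    have hidx : (p + 1) * (nc - 1) + 1 = p * (nc - 1) + 1 + (nc - 1) := by omega
    rw [hidx]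
    exact hT
  -- Step C: sin (δ p) + sin (c p) = 0 for all p < m
  have stepC : ∀ p, p < m → Real.sin (δ p) + Real.sin (c p) = 0 := by
    intro p
    induction p with
    | zero =>
      intro hp
      have f1 : nc - 1 ≤ m * (nc - 1) := Nat.le_mul_of_pos_left _ hm
      have h := heq 1 le_rfl (by omega)
      rw [couplingSum_eq m nc θ 1 {2, (nc - 1) + 1}
          (fun j => (honEdge_one hnc hm j).trans (by simp))
          (fun j hj => by
            simp only [Finset.mem_insert, Finset.mem_singleton] at hj; omega)] at h
      rw [Finset.sum_pair (by omega : (2 : ℕ) ≠ (nc - 1) + 1)] at h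
      rw [hδ, hc, sin_dcc, sin_dcc]
      simpa using h
    | succ p ih =>
      intro hp
      have hSp := ih (by omega)
      have e1 : (p + 1) * (nc - 1) = p * (nc - 1) + (nc - 1) := by ring
      have hj := eq_junc p hp
      have t1 : Real.sin (θ ((p + 1) * (nc - 1)) - θ ((p + 1) * (nc - 1) + 1))
          = - Real.sin (δ p) := by
        have hA := stepA p (by omega) ((p + 1) * (nc - 1)) (by omega) le_rfl
        rw [← hA, sin_dcc,
          show θ ((p + 1) * (nc - 1)) - θ ((p + 1) * (nc - 1) + 1)
            = -(θ ((p + 1) * (nc - 1) + 1) - θ ((p + 1) * (nc - 1))) by ring,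
          Real.sin_neg]
      have t2 : Real.sin (θ ((p + 1) * (nc - 1) + 2) - θ ((p + 1) * (nc - 1) + 1))
          = Real.sin (δ (p + 1)) := by rw [hδ, sin_dcc]
      have t3 : Real.sin (θ (p * (nc - 1) + 1) - θ ((p + 1) * (nc - 1) + 1))
          = - Real.sin (c p) := by
        rw [hc, sin_dcc,
          show θ (p * (nc - 1) + 1) - θ ((p + 1) * (nc - 1) + 1)
            = -(θ ((p + 1) * (nc - 1) + 1) - θ (p * (nc - 1) + 1)) by ring,
          Real.sin_neg]
      have t4 : Real.sin (θ ((p + 2) * (nc - 1) + 1) - θ ((p + 1) * (nc - 1) + 1))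
          = Real.sin (c (p + 1)) := by rw [hc, sin_dcc]
      rw [t1, t2, t3, t4] at hj
      linarith [hj, hSp]
  -- Step D: each δ p is a multiple of 2π/nc with the required bound
  have hncR : (0 : ℝ) < (nc : ℝ) := by exact_mod_cast (by omega : 0 < nc)
  have stepD : ∀ p, ∃ K : ℤ, p < m →
      (δ p = 2 * Real.pi * (K : ℝ) / (nc : ℝ) ∧ |K| ≤ ⌈(nc : ℚ) / 4⌉ - 1) := by
    intro p
    by_cases hp : p < m
    · have hcδ : c p = - δ p := by
        apply sin_inj (hccoh p hp) (by rw [abs_neg]; exact hδcoh p hp)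
        rw [Real.sin_neg]
        linarith [stepC p hp]
      obtain ⟨T, hT⟩ := stepB p hp
      obtain ⟨F, hF⟩ := dcc_spec (θ ((p + 1) * (nc - 1) + 1) - θ (p * (nc - 1) + 1))
      rw [← hc, hcδ] at hF
      have hnc' : ((nc - 1 : ℕ) : ℝ) = (nc : ℝ) - 1 := by
        rw [Nat.cast_sub (by omega : 1 ≤ nc)]; simp
      have hKey : (nc : ℝ) * δ p = 2 * π * ((F : ℝ) - (T : ℝ)) := by
        have h0 := hT.symm.trans hF
        rw [hnc'] at h0
        linarith [h0]
      have hδval : δ p = 2 * Real.pi * ((F - T : ℤ) : ℝ) / (nc : ℝ) := by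
        rw [eq_div_iff (ne_of_gt hncR)]
        push_cast
        linarith [hKey]
      refine ⟨F - T, fun _ => ⟨hδval, ?_⟩⟩
      have h1 : |δ p| < π / 2 := hδcoh p hp
      rw [hδval, abs_div, abs_of_pos hncR, abs_mul,
        abs_of_pos (by linarith : (0 : ℝ) < 2 * π), div_lt_iff₀ hncR] at h1
      have hKR : |((F - T : ℤ) : ℝ)| < (nc : ℝ) / 4 := by nlinarith [hπ, abs_nonneg ((F - T : ℤ) : ℝ)]
      have hZ : 4 * |F - T| < (nc : ℤ) := by
        have h4 : 4 * |((F - T : ℤ) : ℝ)| < (nc : ℝ) := by linarith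
        exact_mod_cast h4
      have hQ : ((|F - T| : ℤ) : ℚ) < (nc : ℚ) / 4 := by
        rw [lt_div_iff₀ (by norm_num : (0 : ℚ) < 4)]
        have : ((4 * |F - T| : ℤ) : ℚ) < ((nc : ℤ) : ℚ) := by exact_mod_cast hZ
        push_cast at this ⊢
        linarith
      have := Int.lt_ceil.mpr hQ
      omega
    · exact ⟨0, fun h => absurd h hp⟩
  choose k hk using stepD
  refine ⟨k, fun p hp => (hk p hp).2, fun p hp i h1 h2 => ?_, fun p hp => ?_⟩
  · rw [stepA p hp i h1 h2]
    exact (hk p hp).1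
  · have hcohx : |dcc (θ (p * (nc - 1) + 1) - θ ((p + 1) * (nc - 1) + 1))| < π / 2 :=
      hcoh _ _ (Or.inr (Or.inr ⟨p, hp, Or.inl ⟨rfl, rfl⟩⟩))
    have hchord : dcc (θ (p * (nc - 1) + 1) - θ ((p + 1) * (nc - 1) + 1)) = δ p := by
      apply sin_inj hcohx (hδcoh p hp)
      rw [sin_dcc]
      have hcs : Real.sin (c p) = - Real.sin (δ p) := by linarith [stepC p hp]
      rw [hc, sin_dcc] at hcs
      rw [show θ (p * (nc - 1) + 1) - θ ((p + 1) * (nc - 1) + 1)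
          = -(θ ((p + 1) * (nc - 1) + 1) - θ (p * (nc - 1) + 1)) by ring,
        Real.sin_neg, hcs]
      ring
    rw [hchord]
    exact (hk p hp).1
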